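/- (Determinant bound for the Gram matrix) For vectors x_1,…,x_T ∈ ℝ^d with ‖x_t‖₂ ≤ L, the matrix A_T = λI_d + Σ_t x_t x_t^T satisfies det(A_T) ≤ (λ + T L²/d)^d. -/

import Mathlib

open Matrix

lemma aux_outer_psd {d : ℕ} (v : Fin d → ℝ) :
    (Matrix.of (fun i j => v i * v j)).PosSemidef := by
  refine Matrix.PosSemidef.of_dotProduct_mulVec_nonneg ?_ fun y => ?_
  · ext i j
    simp [Matrix.conjTranspose_apply, mul_comm]
  · have h : (y : Fin d → ℝ) ⬝ᵥ ((Matrix.of fun i j => v i * v j) *ᵥ y)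
        = (∑ i, v i * y i) ^ 2 := by
      simp only [dotProduct, Matrix.mulVec, Matrix.of_apply, Finset.mul_sum]
      rw [sq, Finset.sum_mul_sum]
      exact Finset.sum_congr rfl fun i _ => Finset.sum_congr rfl fun j _ => by ring
    simp only [star_trivial, h]
    positivity

lemma aux_sum_psd {d T : ℕ} (M : Fin T → Matrix (Fin d) (Fin d) ℝ)
    (h : ∀ t, (M t).PosSemidef) : (∑ t, M t).PosSemidef := by
  classical
  refine Finset.sum_induction M Matrix.PosSemidef
    (fun a b ha hb => ha.add hb) Matrix.PosSemidef.zero (fun t _ => h t)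

/-- Determinant bound for the Gram matrix: for vectors `x 1, …, x T` in
`ℝ^d` with `‖x t‖₂ ≤ L`, the regularized Gram matrix
`A_T = λ I_d + ∑ t, x_t x_tᵀ` satisfies `det A_T ≤ (λ + T L²/d)^d`. -/
theorem stmt_7 (d T : ℕ) (hd : 1 ≤ d) (lam L : ℝ) (hlam : 0 < lam)
    (hL : 0 ≤ L) (x : Fin T → EuclideanSpace ℝ (Fin d))
    (hx : ∀ t, ‖x t‖ ≤ L) :
    (lam • (1 : Matrix (Fin d) (Fin d) ℝ) +
        ∑ t, Matrix.of (fun i j => x t i * x t j)).det ≤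
      (lam + (T : ℝ) * L ^ 2 / (d : ℝ)) ^ d := by
  set A : Matrix (Fin d) (Fin d) ℝ :=
    lam • (1 : Matrix (Fin d) (Fin d) ℝ) + ∑ t, Matrix.of (fun i j => x t i * x t j) with hAdef
  have hdpos : (0:ℝ) < d := by exact_mod_cast hd
  -- positive semidefiniteness
  have hsmul : (lam • (1 : Matrix (Fin d) (Fin d) ℝ)).PosSemidef := by
    have : lam • (1 : Matrix (Fin d) (Fin d) ℝ) = Matrix.diagonal (fun _ => lam) := by
      ext i j
      by_cases h : i = j <;> simp [h, Matrix.one_apply, Matrix.diagonal]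
    rw [this]
    exact Matrix.PosSemidef.diagonal (fun i => hlam.le)
  have hpsd : A.PosSemidef := hsmul.add (aux_sum_psd _ fun t => aux_outer_psd (x t))
  have hA : A.IsHermitian := hpsd.isHermitian
  set μ : Fin d → ℝ := hA.eigenvalues with hμ
  have hμ0 : ∀ i, 0 ≤ μ i := fun i => hpsd.eigenvalues_nonneg i
  -- sum of eigenvalues = trace
  have hsum : ∑ i, μ i = A.trace := by
    simpa using hA.trace_eq_sum_eigenvalues.symm
  -- trace bound
  have htr : A.trace ≤ d * lam + T * L ^ 2 := by
    have hnorm : ∀ t, ∑ i, x t i * x t i ≤ L ^ 2 := by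
      intro t
      have h1 : ∑ i, x t i * x t i = ‖x t‖ ^ 2 := by
        rw [← real_inner_self_eq_norm_sq]
        simp only [PiLp.inner_apply, RCLike.inner_apply, conj_trivial, mul_comm]
      rw [h1]
      exact pow_le_pow_left₀ (norm_nonneg _) (hx t) 2
    have : A.trace = d * lam + ∑ t, ∑ i, x t i * x t i := by
      simp only [hAdef, Matrix.trace, Matrix.diag_apply, Matrix.add_apply, Matrix.smul_apply,
        Matrix.one_apply_eq, smul_eq_mul, mul_one, Matrix.sum_apply, Matrix.of_apply,
        Finset.sum_add_distrib, Finset.sum_const, Finset.card_univ, Fintype.card_fin,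
        nsmul_eq_mul]
      rw [Finset.sum_comm]
    rw [this]
    gcongr
    calc ∑ t, ∑ i, x t i * x t i ≤ ∑ t : Fin T, L ^ 2 :=
          Finset.sum_le_sum fun t _ => hnorm t
      _ = T * L ^ 2 := by simp [mul_comm]
  -- AM-GM
  have amgm := Real.geom_mean_le_arith_mean_weighted Finset.univ (fun _ => 1/(d:ℝ)) μ
    (fun i _ => by positivity)
    (by simp [Finset.sum_const]; field_simp)
    (fun i _ => hμ0 i)
  have hdet : A.det = ∏ i, μ i := by
    simpa using hA.det_eq_prod_eigenvalues
  have hrw : ∏ i, μ i = (∏ i, μ i ^ (1/(d:ℝ))) ^ d := by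
    rw [← Finset.prod_pow]
    refine Finset.prod_congr rfl fun i _ => ?_
    rw [← Real.rpow_natCast (μ i ^ (1/(d:ℝ))) d, ← Real.rpow_mul (hμ0 i)]
    rw [one_div, inv_mul_cancel₀ (ne_of_gt hdpos), Real.rpow_one]
  have hmean : ∑ i, (1/(d:ℝ)) * μ i ≤ lam + T * L ^ 2 / d := by
    rw [← Finset.mul_sum, hsum]
    have heq : lam + (T:ℝ) * L ^ 2 / d = ((d:ℝ) * lam + T * L ^ 2) / d := by
      field_simp
    rw [heq, one_div, ← div_eq_inv_mul]
    gcongr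
  calc A.det = (∏ i, μ i ^ (1/(d:ℝ))) ^ d := by rw [hdet, hrw]
    _ ≤ (∑ i, (1/(d:ℝ)) * μ i) ^ d := by
        apply pow_le_pow_left₀ _ amgm
        exact Finset.prod_nonneg fun i _ => Real.rpow_nonneg (hμ0 i) _
    _ ≤ (lam + T * L ^ 2 / d) ^ d := by
        apply pow_le_pow_left₀ _ hmean
        exact Finset.sum_nonneg fun i _ => mul_nonneg (by positivity) (hμ0 i)
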